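/- For all $\delta > 0$ and integers $B \geq 1$: the map $(\delta, B) \mapsto 1 - 2P(B)A_1(\delta) + A_2(\delta)$ is strictly decreasing in $B$ (for fixed $\delta$) and strictly increasing in $\delta$ (for fixed $B$), where $P(B) = \frac{2^B}{\pi}\sin(\pi/2^B)$, $A_1(\delta) = \frac{20}{\delta\ln 10}(10^{\delta/40}-10^{-\delta/40})$, $A_2(\delta) = \frac{10}{\delta\ln 10}(10^{\delta/20}-10^{-\delta/20})$. -/

import Mathlib

open Real

noncomputable def Pq (B : ℕ) : ℝ := 2 ^ B / π * Real.sin (π / 2 ^ B)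

noncomputable def A1 (δ : ℝ) : ℝ :=
  20 / (δ * Real.log 10) * ((10 : ℝ) ^ (δ/40) - (10 : ℝ) ^ (-(δ/40)))

noncomputable def A2 (δ : ℝ) : ℝ :=
  10 / (δ * Real.log 10) * ((10 : ℝ) ^ (δ/20) - (10 : ℝ) ^ (-(δ/20)))

noncomputable def degradation (B : ℕ) (δ : ℝ) : ℝ := 1 - 2 * Pq B * A1 δ + A2 δ

/-! ### Auxiliary lemmas -/

/-- `x cosh x - sinh x > 0` for `x > 0`. -/
lemma aux_K_pos {x : ℝ} (hx : 0 < x) : 0 < x * Real.cosh x - Real.sinh x := by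
  have hmono : StrictMonoOn (fun x => x * Real.cosh x - Real.sinh x) (Set.Ici 0) := by
    have hd : ∀ x : ℝ, HasDerivAt (fun x => x * Real.cosh x - Real.sinh x)
        (x * Real.sinh x) x := by
      intro x
      have := ((hasDerivAt_id x).mul (Real.hasDerivAt_cosh x)).sub (Real.hasDerivAt_sinh x)
      refine this.congr_deriv ?_
      simp only [id]
      ring
    apply strictMonoOn_of_deriv_pos (convex_Ici 0)
    · exact fun x _ => ((hd x).continuousAt).continuousWithinAt
    · intro x hx
      rw [interior_Ici] at hx
      rw [(hd x).deriv]
      exact mul_pos hx (Real.sinh_pos_iff.2 hx)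
  have := hmono (Set.self_mem_Ici) (Set.mem_Ici.2 hx.le) hx
  simpa using this

/-- `2x cosh 2x - sinh 2x > 4 (x cosh x - sinh x)` for `x > 0`. -/
lemma aux_H2 {x : ℝ} (hx : 0 < x) :
    4 * (x * Real.cosh x - Real.sinh x) < 2*x * Real.cosh (2*x) - Real.sinh (2*x) := by
  have hmono : StrictMonoOn
      (fun x => 2*x * Real.cosh (2*x) - Real.sinh (2*x) - 4 * (x * Real.cosh x - Real.sinh x))
      (Set.Ici 0) := by
    have hd : ∀ x : ℝ, HasDerivAt
        (fun x => 2*x * Real.cosh (2*x) - Real.sinh (2*x) - 4 * (x * Real.cosh x - Real.sinh x))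
        (4*x * Real.sinh (2*x) - 4*x * Real.sinh x) x := by
      intro x
      have h2x : HasDerivAt (fun x : ℝ => 2*x) 2 x := by
        simpa using (hasDerivAt_id x).const_mul 2
      have hc2 : HasDerivAt (fun x => Real.cosh (2*x)) (Real.sinh (2*x) * 2) x :=
        (Real.hasDerivAt_cosh (2*x)).comp x h2x
      have hs2 : HasDerivAt (fun x => Real.sinh (2*x)) (Real.cosh (2*x) * 2) x :=
        (Real.hasDerivAt_sinh (2*x)).comp x h2x
      have := ((h2x.mul hc2).sub hs2).sub
        ((((hasDerivAt_id x).mul (Real.hasDerivAt_cosh x)).sub (Real.hasDerivAt_sinh x)).const_mul 4)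
      refine this.congr_deriv ?_
      simp only [id]
      ring
    apply strictMonoOn_of_deriv_pos (convex_Ici 0)
    · exact fun x _ => ((hd x).continuousAt).continuousWithinAt
    · intro x hx
      rw [interior_Ici, Set.mem_Ioi] at hx
      rw [(hd x).deriv]
      have : Real.sinh x < Real.sinh (2*x) := Real.sinh_lt_sinh.2 (by linarith)
      have h0 : 0 < Real.sinh x := Real.sinh_pos_iff.2 hx
      nlinarith
  have := hmono (Set.self_mem_Ici) (Set.mem_Ici.2 hx.le) hx
  simp only [mul_zero, zero_mul, Real.sinh_zero, Real.cosh_zero, sub_zero] at this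
  linarith [this]

/-- The core one-variable function: `sinh(2x)/(2x) - p · sinh(x)/x`. -/
noncomputable def Gfun (p x : ℝ) : ℝ := Real.sinh (2*x) / (2*x) - p * (Real.sinh x / x)

lemma Gfun_hasDeriv (p : ℝ) {x : ℝ} (hx : x ≠ 0) :
    HasDerivAt (Gfun p)
      ((Real.cosh (2*x) * 2 * (2*x) - Real.sinh (2*x) * 2) / (2*x)^2
        - p * ((Real.cosh x * x - Real.sinh x * 1) / x^2)) x := by
  have h2x : HasDerivAt (fun x : ℝ => 2*x) 2 x := by
    simpa using (hasDerivAt_id x).const_mul 2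
  have hs2 : HasDerivAt (fun x => Real.sinh (2*x)) (Real.cosh (2*x) * 2) x :=
    (Real.hasDerivAt_sinh (2*x)).comp x h2x
  have h1 : HasDerivAt (fun x => Real.sinh (2*x) / (2*x))
      ((Real.cosh (2*x) * 2 * (2*x) - Real.sinh (2*x) * 2) / (2*x)^2) x :=
    hs2.div h2x (by simpa using hx)
  have h2 : HasDerivAt (fun x => Real.sinh x / x)
      ((Real.cosh x * x - Real.sinh x * 1) / x^2) x :=
    (Real.hasDerivAt_sinh x).div (hasDerivAt_id x) hx
  exact h1.sub ((h2.const_mul p))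

lemma Gfun_mono {p : ℝ} (hp : p ≤ 2) : StrictMonoOn (Gfun p) (Set.Ioi 0) := by
  apply strictMonoOn_of_deriv_pos (convex_Ioi 0)
  · exact fun x hx => ((Gfun_hasDeriv p (ne_of_gt hx)).continuousAt).continuousWithinAt
  · intro x hx
    rw [interior_Ioi, Set.mem_Ioi] at hx
    rw [(Gfun_hasDeriv p (ne_of_gt hx)).deriv]
    have hK := aux_K_pos hx
    have hH := aux_H2 hx
    have key : (Real.cosh (2*x) * 2 * (2*x) - Real.sinh (2*x) * 2) / (2*x)^2
        - p * ((Real.cosh x * x - Real.sinh x * 1) / x^2)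
        = (2*(2*x * Real.cosh (2*x) - Real.sinh (2*x)) - 4*p*(x * Real.cosh x - Real.sinh x))
          / (4*x^2) := by
      field_simp
      ring
    rw [key]
    apply div_pos _ (by positivity)
    nlinarith [mul_nonneg hK.le (sub_nonneg.2 hp)]

lemma log10_pos : (0:ℝ) < Real.log 10 := Real.log_pos (by norm_num)

lemma rpow10 (y : ℝ) : (10:ℝ) ^ y = Real.exp (Real.log 10 * y) := by
  rw [Real.rpow_def_of_pos (by norm_num)]

lemma A1_eq {δ : ℝ} (hδ : 0 < δ) :
    A1 δ = Real.sinh (δ * Real.log 10 / 40) / (δ * Real.log 10 / 40) := by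
  have hL := log10_pos
  have h : Real.exp (δ * Real.log 10 / 40) - Real.exp (-(δ * Real.log 10 / 40))
      = 2 * Real.sinh (δ * Real.log 10 / 40) := by
    rw [Real.sinh_eq]; ring
  rw [A1, rpow10, rpow10]
  rw [show Real.log 10 * (δ/40) = δ * Real.log 10 / 40 by ring,
      show Real.log 10 * -(δ/40) = -(δ * Real.log 10 / 40) by ring, h]
  field_simp
  ring

lemma A2_eq {δ : ℝ} (hδ : 0 < δ) :
    A2 δ = Real.sinh (2 * (δ * Real.log 10 / 40)) / (2 * (δ * Real.log 10 / 40)) := by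
  have hL := log10_pos
  have h : Real.exp (2 * (δ * Real.log 10 / 40)) - Real.exp (-(2 * (δ * Real.log 10 / 40)))
      = 2 * Real.sinh (2 * (δ * Real.log 10 / 40)) := by
    rw [Real.sinh_eq]; ring
  rw [A2, rpow10, rpow10]
  rw [show Real.log 10 * (δ/20) = 2 * (δ * Real.log 10 / 40) by ring,
      show Real.log 10 * -(δ/20) = -(2 * (δ * Real.log 10 / 40)) by ring, h]
  field_simp
  ring

lemma A1_pos {δ : ℝ} (hδ : 0 < δ) : 0 < A1 δ := by
  have hL := log10_pos
  have hu : 0 < δ * Real.log 10 / 40 := by positivity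
  rw [A1_eq hδ]
  exact div_pos (Real.sinh_pos_iff.2 hu) hu

lemma degradation_eq {B : ℕ} {δ : ℝ} (hδ : 0 < δ) :
    degradation B δ = 1 + Gfun (2 * Pq B) (δ * Real.log 10 / 40) := by
  rw [degradation, Gfun, A1_eq hδ, A2_eq hδ]
  ring

lemma Pq_eq (B : ℕ) : Pq B = Real.sin (π / 2 ^ B) / (π / 2 ^ B) := by
  have hπ := Real.pi_pos
  have h2 : (0:ℝ) < 2 ^ B := by positivity
  rw [Pq]
  field_simp

lemma Pq_lt_one (B : ℕ) : Pq B < 1 := by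
  have ht : (0:ℝ) < π / 2 ^ B := by positivity
  have := Real.sin_lt ht
  rw [Pq_eq]
  rw [div_lt_one ht]
  exact this

lemma Pq_strictMono {B₁ B₂ : ℕ} (h : B₁ < B₂) : Pq B₁ < Pq B₂ := by
  set t₁ := π / 2 ^ B₁ with ht₁
  set t₂ := π / 2 ^ B₂ with ht₂
  have h2 : (2:ℝ) ^ B₁ < 2 ^ B₂ := by
    exact_mod_cast pow_lt_pow_right₀ (by norm_num : (1:ℝ) < 2) h
  have ht2pos : (0:ℝ) < t₂ := by positivity
  have htlt : t₂ < t₁ := by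
    apply div_lt_div_of_pos_left Real.pi_pos (by positivity) h2
  have ht1le : t₁ ≤ π := by
    apply div_le_self Real.pi_pos.le (one_le_pow₀ (by norm_num))
  -- strict concavity: sin t₂ > (t₂/t₁) * sin t₁
  have hconc := strictConcaveOn_sin_Icc
  have key : t₂ / t₁ * Real.sin t₁ < Real.sin t₂ := by
    have h0 : (0:ℝ) ∈ Set.Icc 0 π := by constructor <;> [rfl; exact Real.pi_pos.le]
    have h1 : t₁ ∈ Set.Icc 0 π := ⟨by positivity, ht1le⟩
    have ha : 0 < 1 - t₂ / t₁ := by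
      rw [sub_pos, div_lt_one (lt_trans ht2pos htlt)]; exact htlt
    have hb : 0 < t₂ / t₁ := div_pos ht2pos (lt_trans ht2pos htlt)
    have ht1pos : (0:ℝ) < t₁ := lt_trans ht2pos htlt
    have := hconc.2 h0 h1 (ne_of_lt ht1pos) ha hb (by ring)
    simp only [smul_eq_mul, Real.sin_zero, mul_zero, zero_add] at this
    rwa [div_mul_cancel₀ _ (ne_of_gt ht1pos)] at this
  have ht1pos : (0:ℝ) < t₁ := lt_trans ht2pos htlt
  rw [Pq_eq, Pq_eq]
  show Real.sin t₁ / t₁ < Real.sin t₂ / t₂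
  rw [div_lt_div_iff₀ ht1pos ht2pos]
  have key2 := mul_lt_mul_of_pos_right key ht1pos
  have he : t₂ / t₁ * Real.sin t₁ * t₁ = Real.sin t₁ * t₂ := by
    field_simp
  linarith [key2, he ▸ key2]

/-- The irreducible residual-SI factor `1 - 2 P(B) A₁(δ) + A₂(δ)` is strictly decreasing in
the phase-shifter resolution `B` (for fixed `δ > 0`) and strictly increasing in the
attenuator stepsize `δ` (for fixed `B ≥ 1`). -/
theorem degradation_monotone :
    (∀ δ : ℝ, 0 < δ → ∀ B₁ B₂ : ℕ, 1 ≤ B₁ → B₁ < B₂ →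
      degradation B₂ δ < degradation B₁ δ) ∧
    (∀ B : ℕ, 1 ≤ B → StrictMonoOn (fun δ => degradation B δ) (Set.Ioi 0)) := by
  constructor
  · intro δ hδ B₁ B₂ _ hB
    have hA := A1_pos hδ
    have hP := Pq_strictMono hB
    rw [degradation, degradation]
    nlinarith
  · intro B _
    intro δ₁ h₁ δ₂ h₂ hlt
    rw [Set.mem_Ioi] at h₁ h₂
    have hL := log10_pos
    have hu₁ : (0:ℝ) < δ₁ * Real.log 10 / 40 := by positivity
    have hu₂ : (0:ℝ) < δ₂ * Real.log 10 / 40 := by positivity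
    have hbig : δ₁ * Real.log 10 / 40 < δ₂ * Real.log 10 / 40 := by
      apply div_lt_div_of_pos_right _ (by norm_num)
      exact mul_lt_mul_of_pos_right hlt hL
    have hp : 2 * Pq B ≤ 2 := by linarith [Pq_lt_one B]
    have := Gfun_mono hp (Set.mem_Ioi.2 hu₁) (Set.mem_Ioi.2 hu₂) hbig
    simp only []
    rw [degradation_eq h₁, degradation_eq h₂]
    linarith
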